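/- Fix integers n ≥ 2 and r ≥ 1. For a prime p, let c(p) be the number of sublattices Λ of ℤ^n with ℤ^n/Λ cyclic of order p^r, and let a(p) be the total number of sublattices of ℤ^n of index p^r. Then the ratio c(p)/a(p) (as a real number) tends to 1 as p tends to infinity along the primes; that is, for every ε > 0 there exists N such that |c(p)/a(p) − 1| < ε for every prime p > N. -/

import Mathlib

open Submodule

namespace Stmt19

noncomputable def redMap (n m : ℕ) : (Fin n → ℤ) →ₗ[ℤ] (Fin n → ZMod m) :=
  LinearMap.pi fun i => (Int.castAddHom (ZMod m)).toIntLinearMap.comp (LinearMap.proj i)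

lemma ker_redMap_le {n m : ℕ} (Λ : Submodule ℤ (Fin n → ℤ))
    (h : Nat.card ((Fin n → ℤ) ⧸ Λ) = m) :
    LinearMap.ker (redMap n m) ≤ Λ := by
  intro x hx
  simp only [LinearMap.mem_ker, redMap, LinearMap.pi_apply] at hx
  have hdvd : ∀ i, (m : ℤ) ∣ x i := by
    intro i
    have := congrFun hx i
    simpa [ZMod.intCast_zmod_eq_zero_iff_dvd] using this
  choose y hy using hdvd
  have hxy : x = (m : ℤ) • y := by
    funext i; simp [hy i]
  have hz : m • (Submodule.Quotient.mk y : (Fin n → ℤ) ⧸ Λ) = 0 := h ▸ card_nsmul_eq_zero'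
  rw [hxy, ← Quotient.mk_eq_zero Λ, Submodule.Quotient.mk_smul, natCast_zsmul]
  exact hz

lemma finite_subtype (n m : ℕ) (hm : m ≠ 0) :
    Finite {Λ : Submodule ℤ (Fin n → ℤ) // Nat.card ((Fin n → ℤ) ⧸ Λ) = m} := by
  haveI : NeZero m := ⟨hm⟩
  haveI : Finite (Submodule ℤ (Fin n → ZMod m)) :=
    Finite.of_injective (fun S => (S : Set (Fin n → ZMod m))) SetLike.coe_injective
  refine Finite.of_injective
    (fun Λ => Submodule.map (redMap n m) Λ.1) ?_
  rintro ⟨Λ₁, h₁⟩ ⟨Λ₂, h₂⟩ h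
  have e1 : Submodule.comap (redMap n m) (Submodule.map (redMap n m) Λ₁) = Λ₁ := by
    rw [Submodule.comap_map_eq]
    exact sup_eq_left.mpr (ker_redMap_le Λ₁ h₁)
  have e2 : Submodule.comap (redMap n m) (Submodule.map (redMap n m) Λ₂) = Λ₂ := by
    rw [Submodule.comap_map_eq]
    exact sup_eq_left.mpr (ker_redMap_le Λ₂ h₂)
  simp only [Subtype.mk.injEq]
  rw [← e1, ← e2]
  simp only at h
  rw [h]

/-- every ideal of ℤ with finite quotient of cardinality k is span {k} -/
lemma ideal_eq_span {I : Ideal ℤ} {k : ℕ} (hk : k ≠ 0) (h : Nat.card (ℤ ⧸ I) = k) :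
    I = Ideal.span {(k : ℤ)} := by
  obtain ⟨d, rfl⟩ : ∃ d : ℤ, I = Ideal.span {d} :=
    ⟨Submodule.IsPrincipal.generator I, (Ideal.span_singleton_generator I).symm⟩
  have : Nat.card (ℤ ⧸ Ideal.span {d}) = d.natAbs :=
    (Nat.card_congr (Int.quotientSpanEquivZMod d).toEquiv).trans (Nat.card_zmod _)
  rw [this] at h
  rw [← Int.span_natAbs d, h]


noncomputable def phi {n q : ℕ} (u : Fin n → ZMod q) : (Fin n → ℤ) →ₗ[ℤ] ZMod q where
  toFun x := ∑ i, x i • u i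
  map_add' x y := by simp [add_smul, Finset.sum_add_distrib]
  map_smul' c x := by simp [Finset.mul_sum, mul_smul]

lemma phi_single {n q : ℕ} (u : Fin n → ZMod q) (i0 : Fin n) (c : ℤ) :
    phi u (Pi.single i0 c) = c • u i0 := by
  simp only [phi, LinearMap.coe_mk, AddHom.coe_mk]
  rw [Finset.sum_eq_single i0]
  · simp
  · intro b _ hb; simp [Pi.single_apply, hb]
  · simp

lemma phi_surjective {n q : ℕ} [NeZero q] (u : Fin n → ZMod q) (i0 : Fin n) (h1 : u i0 = 1) :
    Function.Surjective (phi u) := by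
  intro t
  refine ⟨Pi.single i0 ((t.val : ℤ)), ?_⟩
  rw [phi_single, h1, zsmul_one, Int.cast_natCast]
  exact ZMod.natCast_rightInverse t

variable {n q : ℕ}

def i0 (n : ℕ) (hn : 1 ≤ n) : Fin n := ⟨n - 1, by omega⟩

def uvec (q : ℕ) (n : ℕ) (v : Fin (n-1) → ZMod q) : Fin n → ZMod q :=
  fun i => if h : (i : ℕ) < n - 1 then v ⟨i, h⟩ else 1

lemma uvec_i0 (hn : 1 ≤ n) (v : Fin (n-1) → ZMod q) : uvec q n v (i0 n hn) = 1 := by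
  simp [uvec, i0]

theorem card_le_cocyclic (n r p : ℕ) (hn : 1 ≤ n) (hp : p.Prime) :
    p ^ (r * (n-1)) ≤ Nat.card {Λ : Submodule ℤ (Fin n → ℤ) //
      IsAddCyclic ((Fin n → ℤ) ⧸ Λ) ∧ Nat.card ((Fin n → ℤ) ⧸ Λ) = p ^ r} := by
  set q := p ^ r with hq
  haveI : NeZero q := ⟨pow_ne_zero _ hp.pos.ne'⟩
  haveI hfin : Finite {Λ : Submodule ℤ (Fin n → ℤ) // Nat.card ((Fin n → ℤ) ⧸ Λ) = p ^ r} :=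
    finite_subtype n (p ^ r) (pow_ne_zero _ hp.pos.ne')
  haveI : Finite {Λ : Submodule ℤ (Fin n → ℤ) //
      IsAddCyclic ((Fin n → ℤ) ⧸ Λ) ∧ Nat.card ((Fin n → ℤ) ⧸ Λ) = p ^ r} := by
    refine Finite.of_injective (β := {Λ : Submodule ℤ (Fin n → ℤ) //
      Nat.card ((Fin n → ℤ) ⧸ Λ) = p ^ r}) (fun Λ => ⟨Λ.1, Λ.2.2⟩) ?_
    rintro ⟨Λ₁, h₁⟩ ⟨Λ₂, h₂⟩ h
    simpa using congrArg Subtype.val h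
  have keyquot : ∀ v : Fin (n-1) → ZMod q,
      ((Fin n → ℤ) ⧸ LinearMap.ker (phi (uvec q n v))) ≃ₗ[ℤ] ZMod q :=
    fun v => LinearMap.quotKerEquivOfSurjective _ (phi_surjective _ _ (uvec_i0 hn v))
  have hcard : ∀ v : Fin (n-1) → ZMod q,
      Nat.card ((Fin n → ℤ) ⧸ LinearMap.ker (phi (uvec q n v))) = p ^ r := fun v =>
    (Nat.card_congr (keyquot v).toEquiv).trans (Nat.card_zmod q)
  have hcyc : ∀ v : Fin (n-1) → ZMod q,
      IsAddCyclic ((Fin n → ℤ) ⧸ LinearMap.ker (phi (uvec q n v))) := fun v =>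
    isAddCyclic_of_surjective (keyquot v).symm.toLinearMap (keyquot v).symm.surjective
  have := Nat.card_le_card_of_injective
    (α := Fin (n-1) → ZMod q)
    (fun v => (⟨LinearMap.ker (phi (uvec q n v)), hcyc v, hcard v⟩ :
      {Λ : Submodule ℤ (Fin n → ℤ) //
        IsAddCyclic ((Fin n → ℤ) ⧸ Λ) ∧ Nat.card ((Fin n → ℤ) ⧸ Λ) = p ^ r})) ?_
  · calc p ^ (r * (n-1)) = Nat.card (Fin (n-1) → ZMod q) := by
          simp [Nat.card_fun, Nat.card_zmod, pow_mul, hq]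
        _ ≤ _ := this
  · intro v w h
    have hker : LinearMap.ker (phi (uvec q n v)) = LinearMap.ker (phi (uvec q n w)) := by
      simpa using congrArg Subtype.val h
    funext i
    set c : ℤ := ((v i).val : ℤ) with hc
    have hci : i.val < n - 1 := i.isLt
    set ii : Fin n := ⟨i, by omega⟩ with hii
    have hne : ii ≠ i0 n hn := by
      simp only [i0, Fin.ne_iff_vne, hii, Fin.val_mk]; omega
    set x : Fin n → ℤ := Pi.single ii 1 - Pi.single (i0 n hn) c with hx
    have hval : ∀ u' : Fin n → ZMod q, phi u' x = u' ii - c • u' (i0 n hn) := by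
      intro u'
      rw [hx, map_sub, phi_single, phi_single, one_smul]
    have hxv : phi (uvec q n v) x = 0 := by
      rw [hval, uvec_i0]
      have huv : uvec q n v ii = v i := by
        simp only [uvec, hii, dif_pos hci]
      rw [huv, zsmul_one, hc, Int.cast_natCast, ZMod.natCast_rightInverse (v i), sub_self]
    have hxw : phi (uvec q n w) x = 0 := by
      rw [← LinearMap.mem_ker, ← hker, LinearMap.mem_ker]; exact hxv
    rw [hval, uvec_i0] at hxw
    have huw : uvec q n w ii = w i := by simp only [uvec, hii, dif_pos hci]
    rw [huw, zsmul_one, sub_eq_zero] at hxw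
    rw [hxw, hc, Int.cast_natCast]
    exact (ZMod.natCast_rightInverse (v i)).symm


variable (n : ℕ)

/-- last-coordinate projection -/
noncomputable def pr : (Fin (n+1) → ℤ) →ₗ[ℤ] ℤ := LinearMap.proj (Fin.last n)

/-- inclusion of ℤ^n as first n coordinates -/
noncomputable def incl : (Fin n → ℤ) →ₗ[ℤ] (Fin (n+1) → ℤ) :=
  LinearMap.pi fun i => if h : (i : ℕ) < n then LinearMap.proj (⟨i, h⟩ : Fin n) else 0

/-- restriction to first n coordinates -/
noncomputable def res : (Fin (n+1) → ℤ) →ₗ[ℤ] (Fin n → ℤ) :=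
  LinearMap.funLeft ℤ ℤ Fin.castSucc

variable {n}

lemma pr_incl (x : Fin n → ℤ) : pr n (incl n x) = 0 := by
  simp [pr, incl, LinearMap.pi_apply, Fin.last]

lemma incl_res (x : Fin (n+1) → ℤ) (hx : pr n x = 0) : incl n (res n x) = x := by
  funext i
  simp only [incl, res, LinearMap.pi_apply, LinearMap.funLeft_apply]
  by_cases h : (i : ℕ) < n
  · simp only [dif_pos h, LinearMap.proj_apply]
    have : Fin.castSucc (⟨i, h⟩ : Fin n) = i := Fin.ext rfl
    show x (Fin.castSucc ⟨i, h⟩) = x i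
    rw [this]
  · have hi := i.isLt
    have : i = Fin.last n := Fin.ext (by simp only [Fin.val_last]; omega)
    subst this
    simp only [dif_neg h, LinearMap.zero_apply]
    exact (hx).symm

lemma range_incl : LinearMap.range (incl n) = LinearMap.ker (pr n) := by
  apply le_antisymm
  · rintro _ ⟨x, rfl⟩
    simp [LinearMap.mem_ker, pr_incl]
  · intro x hx
    exact ⟨res n x, incl_res x hx⟩

lemma pr_surjective : Function.Surjective (pr n) := fun t => ⟨fun _ => t, rfl⟩

/-- index multiplicativity -/
lemma card_mul_card (Λ : Submodule ℤ (Fin (n+1) → ℤ)) :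
    Nat.card (ℤ ⧸ Λ.map (pr n)) * Nat.card ((Fin n → ℤ) ⧸ Λ.comap (incl n)) =
      Nat.card ((Fin (n+1) → ℤ) ⧸ Λ) := by
  have key := Submodule.card_quotient_mul_card_quotient (Λ ⊔ LinearMap.ker (pr n)) Λ le_sup_left
  -- equiv1 : M ⧸ (Λ ⊔ ker pr) ≃ ℤ ⧸ Λ.map pr
  have hker : LinearMap.ker ((Λ.map (pr n)).mkQ ∘ₗ pr n) = Λ ⊔ LinearMap.ker (pr n) := by
    rw [LinearMap.ker_comp, Submodule.ker_mkQ, Submodule.comap_map_eq]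
  have hsurj : Function.Surjective ((Λ.map (pr n)).mkQ ∘ₗ pr n) :=
    (Submodule.mkQ_surjective _).comp pr_surjective
  have e1 : ((Fin (n+1) → ℤ) ⧸ (Λ ⊔ LinearMap.ker (pr n))) ≃ₗ[ℤ] ℤ ⧸ Λ.map (pr n) :=
    (Submodule.quotEquivOfEq _ _ hker.symm).trans
      (LinearMap.quotKerEquivOfSurjective _ hsurj)
  -- equiv2 : ℤ^n ⧸ Λ.comap incl ≃ (Λ ⊔ ker pr).map Λ.mkQ
  have hker2 : LinearMap.ker (Λ.mkQ ∘ₗ incl n) = Λ.comap (incl n) := by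
    rw [LinearMap.ker_comp, Submodule.ker_mkQ]
  have hrange2 : LinearMap.range (Λ.mkQ ∘ₗ incl n) = (Λ ⊔ LinearMap.ker (pr n)).map Λ.mkQ := by
    rw [LinearMap.range_comp, range_incl, Submodule.map_sup]
    rw [Submodule.mkQ_map_self, bot_sup_eq]
  have e2 : ((Fin n → ℤ) ⧸ Λ.comap (incl n)) ≃ₗ[ℤ] ((Λ ⊔ LinearMap.ker (pr n)).map Λ.mkQ) :=
    (Submodule.quotEquivOfEq _ _ hker2.symm).trans
      ((LinearMap.quotKerEquivRange _).trans (LinearEquiv.ofEq _ _ hrange2))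
  rw [Nat.card_congr e1.symm.toEquiv, Nat.card_congr e2.toEquiv, mul_comm]
  exact key


lemma nat_card_sigma {ι : Type*} [Fintype ι] (f : ι → Type*) [∀ i, Finite (f i)] :
    Nat.card (Σ i, f i) = ∑ i, Nat.card (f i) := by
  haveI : ∀ i, Fintype (f i) := fun i => Fintype.ofFinite (f i)
  simp [Nat.card_eq_fintype_card, Fintype.card_sigma]

lemma card_sigma_const {ι : Type*} [Finite ι] (f : ι → Type*) [∀ i, Finite (f i)] (k : ℕ)
    (h : ∀ i, Nat.card (f i) = k) : Nat.card (Σ i, f i) = Nat.card ι * k := by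
  haveI := Fintype.ofFinite ι
  rw [nat_card_sigma]
  rw [Finset.sum_congr rfl (fun i _ => h i)]
  simp [Finset.sum_const, Finset.card_univ, Nat.card_eq_fintype_card, mul_comm]

lemma heq_quot {P Q : Submodule ℤ (Fin n → ℤ)} (h : P = Q) (x y : Fin n → ℤ)
    (hxy : HEq (Submodule.Quotient.mk x : _ ⧸ P) (Submodule.Quotient.mk y : _ ⧸ Q)) :
    x - y ∈ P := by
  subst h
  exact (Submodule.Quotient.eq P).1 (eq_of_heq hxy)

lemma core_le {Λ₁ Λ₂ : Submodule ℤ (Fin (n+1) → ℤ)} (d : ℤ)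
    (hspan : Λ₁.map (pr n) = Ideal.span {d})
    (hcom : Λ₁.comap (incl n) = Λ₂.comap (incl n))
    {x₁ x₂ : Fin (n+1) → ℤ} (hx₁ : x₁ ∈ Λ₁) (hx₂ : x₂ ∈ Λ₂)
    (hp₁ : pr n x₁ = d) (hp₂ : pr n x₂ = d)
    (hv : res n x₁ - res n x₂ ∈ Λ₁.comap (incl n)) : Λ₁ ≤ Λ₂ := by
  intro y hy
  have h1 : pr n y ∈ Ideal.span {d} := hspan ▸ Submodule.mem_map_of_mem hy
  obtain ⟨t, ht⟩ := Ideal.mem_span_singleton'.mp h1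
  have hz1 : y - t • x₁ ∈ Λ₁ := Λ₁.sub_mem hy (Λ₁.smul_mem t hx₁)
  have hzpr : pr n (y - t • x₁) = 0 := by
    rw [map_sub, map_smul, hp₁, smul_eq_mul, ht, sub_self]
  have hres : res n (y - t • x₁) ∈ Λ₁.comap (incl n) := by
    simp only [Submodule.mem_comap]
    rw [incl_res _ hzpr]; exact hz1
  have hd : pr n (x₁ - x₂) = 0 := by simp [map_sub, hp₁, hp₂]
  have hy2 : y = incl n (res n (y - t • x₁)) + t • (incl n (res n x₁ - res n x₂)) + t • x₂ := by
    rw [← map_sub (res n) x₁ x₂, incl_res _ hzpr, incl_res _ hd]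
    module
  rw [hy2]
  refine Λ₂.add_mem (Λ₂.add_mem ?_ (Λ₂.smul_mem t ?_)) (Λ₂.smul_mem t hx₂)
  · rw [hcom] at hres
    exact Submodule.mem_comap.mp hres
  · rw [hcom] at hv
    exact Submodule.mem_comap.mp hv

lemma recursion (n r p : ℕ) (hp : p.Prime) :
    Nat.card {Λ : Submodule ℤ (Fin (n+1) → ℤ) // Nat.card ((Fin (n+1) → ℤ) ⧸ Λ) = p ^ r}
      ≤ ∑ j : Fin (r+1), p ^ (r - (j:ℕ)) *
          Nat.card {Λ' : Submodule ℤ (Fin n → ℤ) //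
            Nat.card ((Fin n → ℤ) ⧸ Λ') = p ^ (r - (j:ℕ))} := by
  classical
  set S := {Λ : Submodule ℤ (Fin (n+1) → ℤ) // Nat.card ((Fin (n+1) → ℤ) ⧸ Λ) = p ^ r} with hS
  haveI : Finite S := finite_subtype (n+1) (p^r) (pow_ne_zero _ hp.pos.ne')
  set G : S → Fin (r+1) :=
    fun s => ⟨min ((Nat.card (ℤ ⧸ s.1.map (pr n))).factorization p) r, by omega⟩ with hG
  have hcardS : Nat.card S = ∑ j : Fin (r+1), Nat.card {s : S // G s = j} := by
    rw [← nat_card_sigma]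
    exact (Nat.card_congr (Equiv.sigmaFiberEquiv G)).symm
  rw [hcardS]
  refine Finset.sum_le_sum fun j _ => ?_
  -- fix j; facts about elements of the fiber
  set jv := (j : ℕ) with hjv
  have hjr : jv ≤ r := by omega
  set k := p ^ (r - jv) with hk
  set d : ℤ := ((p ^ jv : ℕ) : ℤ) with hd
  have fiber_facts : ∀ s : {s : S // G s = j},
      Nat.card (ℤ ⧸ s.1.1.map (pr n)) = p ^ jv ∧
      Nat.card ((Fin n → ℤ) ⧸ s.1.1.comap (incl n)) = k := by
    rintro ⟨⟨Λ, hΛ⟩, hGs⟩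
    have hmul := card_mul_card Λ
    rw [hΛ] at hmul
    have hdvd : Nat.card (ℤ ⧸ Λ.map (pr n)) ∣ p ^ r := ⟨_, hmul.symm⟩
    obtain ⟨i, hir, hc1⟩ := (Nat.dvd_prime_pow hp).mp hdvd
    have hGs' : jv = i := by
      have : G ⟨Λ, hΛ⟩ = j := hGs
      rw [hG] at this
      have := congrArg Fin.val this
      simp only at this
      rw [hc1, hp.factorization_pow, Finsupp.single_eq_same, min_eq_left hir] at this
      omega
    rw [hGs'] at hjr ⊢
    refine ⟨hc1, ?_⟩
    rw [hc1] at hmul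
    have hpow : p ^ i * p ^ (r - i) = p ^ r := by
      rw [← pow_add]; congr 1; omega
    have := Nat.eq_of_mul_eq_mul_left (pow_pos hp.pos i) (hmul.trans hpow.symm)
    rw [hk, hGs', this]
  have exists_x : ∀ s : {s : S // G s = j}, ∃ x, x ∈ s.1.1 ∧ pr n x = d := by
    intro s
    have hspan : s.1.1.map (pr n) = Ideal.span {d} :=
      ideal_eq_span (pow_ne_zero _ hp.pos.ne') (fiber_facts s).1
    have : d ∈ s.1.1.map (pr n) := by
      rw [hspan]; exact Ideal.mem_span_singleton_self d
    obtain ⟨x, hx, hpx⟩ := Submodule.mem_map.mp this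
    exact ⟨x, hx, hpx⟩
  -- target type
  set T := Σ L : {Λ' : Submodule ℤ (Fin n → ℤ) // Nat.card ((Fin n → ℤ) ⧸ Λ') = k},
      ((Fin n → ℤ) ⧸ L.1) with hT
  haveI : Finite {Λ' : Submodule ℤ (Fin n → ℤ) // Nat.card ((Fin n → ℤ) ⧸ Λ') = k} :=
    finite_subtype n k (pow_ne_zero _ hp.pos.ne')
  haveI hfinq : ∀ L : {Λ' : Submodule ℤ (Fin n → ℤ) // Nat.card ((Fin n → ℤ) ⧸ Λ') = k},
      Finite ((Fin n → ℤ) ⧸ L.1) :=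
    fun L => Nat.finite_of_card_ne_zero (by rw [L.2]; exact pow_ne_zero _ hp.pos.ne')
  have hcardT : Nat.card T =
      Nat.card {Λ' : Submodule ℤ (Fin n → ℤ) // Nat.card ((Fin n → ℤ) ⧸ Λ') = k} * k :=
    card_sigma_const _ k (fun L => L.2)
  set F : {s : S // G s = j} → T := fun s =>
    ⟨⟨s.1.1.comap (incl n), (fiber_facts s).2⟩,
      Submodule.Quotient.mk (res n (exists_x s).choose)⟩ with hF
  have hFinj : Function.Injective F := by
    intro a b hab
    obtain ⟨hxa, hpa⟩ := (exists_x a).choose_spec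
    obtain ⟨hxb, hpb⟩ := (exists_x b).choose_spec
    set xa := (exists_x a).choose
    set xb := (exists_x b).choose
    rw [hF] at hab
    obtain ⟨h1, h2⟩ := Sigma.mk.inj_iff.mp hab
    have hcom : a.1.1.comap (incl n) = b.1.1.comap (incl n) := congrArg Subtype.val h1
    have hv : res n xa - res n xb ∈ a.1.1.comap (incl n) := heq_quot hcom _ _ h2
    have hspan_a : a.1.1.map (pr n) = Ideal.span {d} :=
      ideal_eq_span (pow_ne_zero _ hp.pos.ne') (fiber_facts a).1
    have hspan_b : b.1.1.map (pr n) = Ideal.span {d} :=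
      ideal_eq_span (pow_ne_zero _ hp.pos.ne') (fiber_facts b).1
    have hle1 : a.1.1 ≤ b.1.1 := core_le d hspan_a hcom hxa hxb hpa hpb hv
    have hv' : res n xb - res n xa ∈ b.1.1.comap (incl n) := by
      rw [← hcom]
      simpa using (a.1.1.comap (incl n)).neg_mem hv
    have hle2 : b.1.1 ≤ a.1.1 := core_le d hspan_b hcom.symm hxb hxa hpb hpa hv'
    exact Subtype.ext (Subtype.ext (le_antisymm hle1 hle2))
  have := Nat.card_le_card_of_injective F hFinj
  rw [hcardT] at this
  calc Nat.card {s : S // G s = j} ≤ _ := this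
    _ = p ^ (r - jv) * Nat.card {Λ' : Submodule ℤ (Fin n → ℤ) //
          Nat.card ((Fin n → ℤ) ⧸ Λ') = p ^ (r - jv)} := by rw [hk, mul_comm]


/-- the generalized count -/
noncomputable def A (n m : ℕ) : ℕ :=
  Nat.card {Λ : Submodule ℤ (Fin n → ℤ) // Nat.card ((Fin n → ℤ) ⧸ Λ) = m}

lemma dim_one (m : ℕ) (hm : m ≠ 0) : A 1 m ≤ 1 := by
  have hsub : Subsingleton {Λ : Submodule ℤ (Fin 1 → ℤ) // Nat.card ((Fin 1 → ℤ) ⧸ Λ) = m} := by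
    constructor
    rintro ⟨Λ₁, h₁⟩ ⟨Λ₂, h₂⟩
    set e : (Fin 1 → ℤ) ≃ₗ[ℤ] ℤ := LinearEquiv.funUnique (Fin 1) ℤ ℤ with he
    have key : ∀ (Λ : Submodule ℤ (Fin 1 → ℤ)), Nat.card ((Fin 1 → ℤ) ⧸ Λ) = m →
        Λ.map (e : (Fin 1 → ℤ) →ₗ[ℤ] ℤ) = Ideal.span {(m : ℤ)} := by
      intro Λ h
      have hq : ((Fin 1 → ℤ) ⧸ Λ) ≃ₗ[ℤ] ℤ ⧸ (Λ.map (e : (Fin 1 → ℤ) →ₗ[ℤ] ℤ) : Submodule ℤ ℤ) :=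
        Submodule.Quotient.equiv Λ (Λ.map (e : (Fin 1 → ℤ) →ₗ[ℤ] ℤ)) e rfl
      refine ideal_eq_span hm ?_
      rw [← h]
      exact (Nat.card_congr hq.toEquiv).symm
    have h12 : Λ₁.map (e : (Fin 1 → ℤ) →ₗ[ℤ] ℤ) = Λ₂.map (e : (Fin 1 → ℤ) →ₗ[ℤ] ℤ) := (key Λ₁ h₁).trans (key Λ₂ h₂).symm
    have : Λ₁ = Λ₂ := Submodule.map_injective_of_injective e.injective h12
    simp [this]
  haveI := hsub
  unfold A
  rcases isEmpty_or_nonempty {Λ : Submodule ℤ (Fin 1 → ℤ) // Nat.card ((Fin 1 → ℤ) ⧸ Λ) = m}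
    with h | h
  · rw [Nat.card_of_isEmpty]; omega
  · haveI : Unique {Λ : Submodule ℤ (Fin 1 → ℤ) // Nat.card ((Fin 1 → ℤ) ⧸ Λ) = m} :=
      uniqueOfSubsingleton h.some
    rw [Nat.card_unique]

lemma recursion' (n k p : ℕ) (hp : p.Prime) :
    A (n+1) (p^k) ≤ ∑ j : Fin (k+1), p ^ (k - (j:ℕ)) * A n (p ^ (k - (j:ℕ))) :=
  recursion n k p hp

lemma bound (n : ℕ) : ∀ k : ℕ, ∃ D : ℕ, ∀ p : ℕ, p.Prime →
    p * A (n+1) (p^k) ≤ p^(k*n + 1) + D * p^(k*n) := by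
  induction n with
  | zero =>
    intro k
    refine ⟨0, fun p hp => ?_⟩
    have h1 := dim_one (p^k) (pow_ne_zero _ hp.pos.ne')
    calc p * A 1 (p^k) ≤ p * 1 := Nat.mul_le_mul_left p h1
      _ ≤ p^(k*0+1) + 0 * p^(k*0) := by simp
  | succ n ih =>
    intro k
    choose Dn hDn using ih
    set D := (Finset.range (k+1)).sup Dn with hD
    refine ⟨D + k * (1 + D), fun p hp => ?_⟩
    have hp1 : 1 ≤ p := hp.pos
    have hrec := recursion' (n+1) k p hp
    have hterm : ∀ j : Fin (k+1),
        p * (p ^ (k - (j:ℕ)) * A (n+1) (p ^ (k - (j:ℕ))))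
          ≤ p^((k - (j:ℕ))*(n+1) + 1) + D * p^((k - (j:ℕ))*(n+1)) := by
      intro j
      have hDle : Dn (k - (j:ℕ)) ≤ D :=
        Finset.le_sup (Finset.mem_range.mpr (by omega))
      have := hDn (k - (j:ℕ)) p hp
      calc p * (p ^ (k - (j:ℕ)) * A (n+1) (p ^ (k - (j:ℕ))))
          = p ^ (k - (j:ℕ)) * (p * A (n+1) (p ^ (k - (j:ℕ)))) := by ring
        _ ≤ p ^ (k - (j:ℕ)) * (p^((k - (j:ℕ))*n + 1) + Dn (k - (j:ℕ)) * p^((k - (j:ℕ))*n)) :=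
            Nat.mul_le_mul_left _ this
        _ ≤ p ^ (k - (j:ℕ)) * (p^((k - (j:ℕ))*n + 1) + D * p^((k - (j:ℕ))*n)) := by
            exact Nat.mul_le_mul_left _ (by
              exact Nat.add_le_add_left (Nat.mul_le_mul_right _ hDle) _)
        _ = p^((k - (j:ℕ))*(n+1) + 1) + D * p^((k - (j:ℕ))*(n+1)) := by
            have e1 : (k - (j:ℕ)) + ((k - (j:ℕ))*n + 1) = (k - (j:ℕ))*(n+1) + 1 := by ring
            have e2 : (k - (j:ℕ)) + (k - (j:ℕ))*n = (k - (j:ℕ))*(n+1) := by ring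
            rw [Nat.mul_add, ← pow_add, e1, mul_left_comm, ← pow_add, e2]
    have main : p * A (n+2) (p^k)
        ≤ ∑ j : Fin (k+1), (p^((k - (j:ℕ))*(n+1) + 1) + D * p^((k - (j:ℕ))*(n+1))) := by
      calc p * A (n+2) (p^k)
          ≤ p * ∑ j : Fin (k+1), p ^ (k - (j:ℕ)) * A (n+1) (p ^ (k - (j:ℕ))) :=
            Nat.mul_le_mul_left p hrec
        _ = ∑ j : Fin (k+1), p * (p ^ (k - (j:ℕ)) * A (n+1) (p ^ (k - (j:ℕ)))) := by
            rw [Finset.mul_sum]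
        _ ≤ _ := Finset.sum_le_sum (fun j _ => hterm j)
    -- split off j = 0
    rw [Fin.sum_univ_succ] at main
    simp only [Fin.val_zero, Nat.sub_zero] at main
    have hrest : ∑ j : Fin k, (p^((k - ((j.succ:Fin (k+1)):ℕ))*(n+1) + 1)
        + D * p^((k - ((j.succ:Fin (k+1)):ℕ))*(n+1)))
        ≤ k * ((1 + D) * p^(k*(n+1))) := by
      calc _ ≤ ∑ _j : Fin k, (1 + D) * p^(k*(n+1)) := by
              refine Finset.sum_le_sum (fun j _ => ?_)
              have hsv : ((j.succ : Fin (k+1)) : ℕ) = (j:ℕ) + 1 := rfl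
              have h1 : (k - ((j:ℕ)+1))*(n+1) + 1 ≤ k*(n+1) := by
                have hjk : (j:ℕ) < k := j.isLt
                have : (k - ((j:ℕ)+1))*(n+1) + (n+1) ≤ k*(n+1) := by
                  rw [← Nat.add_one_mul]
                  exact Nat.mul_le_mul_right _ (by omega)
                omega
              have h2 : (k - ((j:ℕ)+1))*(n+1) ≤ k*(n+1) :=
                Nat.mul_le_mul_right _ (by omega)
              rw [hsv]
              calc p^((k - ((j:ℕ)+1))*(n+1) + 1) + D * p^((k - ((j:ℕ)+1))*(n+1))
                  ≤ p^(k*(n+1)) + D * p^(k*(n+1)) :=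
                    Nat.add_le_add (Nat.pow_le_pow_right hp1 h1)
                      (Nat.mul_le_mul_left _ (Nat.pow_le_pow_right hp1 h2))
                _ = (1 + D) * p^(k*(n+1)) := by ring
        _ = k * ((1 + D) * p^(k*(n+1))) := by
              rw [Finset.sum_const, Finset.card_univ, Fintype.card_fin, smul_eq_mul]
    calc p * A (n+2) (p^k) ≤ _ := main
      _ ≤ (p^(k*(n+1) + 1) + D * p^(k*(n+1))) + k * ((1 + D) * p^(k*(n+1))) :=
          Nat.add_le_add_left hrest _
      _ = p^(k*(n+1) + 1) + (D + k * (1 + D)) * p^(k*(n+1)) := by ring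


lemma coc_le (n m : ℕ) (hm : m ≠ 0) :
    Nat.card {Λ : Submodule ℤ (Fin n → ℤ) //
        IsAddCyclic ((Fin n → ℤ) ⧸ Λ) ∧ Nat.card ((Fin n → ℤ) ⧸ Λ) = m}
      ≤ Nat.card {Λ : Submodule ℤ (Fin n → ℤ) // Nat.card ((Fin n → ℤ) ⧸ Λ) = m} := by
  haveI : Finite {Λ : Submodule ℤ (Fin n → ℤ) // Nat.card ((Fin n → ℤ) ⧸ Λ) = m} :=
    finite_subtype n m hm
  refine Nat.card_le_card_of_injective (fun s => ⟨s.1, s.2.2⟩) ?_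
  rintro ⟨Λ₁, h₁⟩ ⟨Λ₂, h₂⟩ h
  simpa using congrArg Subtype.val h

end Stmt19


/-- c(p): the number of sublattices Λ of ℤ^n with ℤ^n/Λ cyclic of order p^r. -/
noncomputable def cocyclicCount (n r p : ℕ) : ℕ :=
  Nat.card {Λ : Submodule ℤ (Fin n → ℤ) //
    IsAddCyclic ((Fin n → ℤ) ⧸ Λ) ∧ Nat.card ((Fin n → ℤ) ⧸ Λ) = p ^ r}

/-- a(p): the total number of sublattices of ℤ^n of index p^r. -/
noncomputable def sublatticeCount (n r p : ℕ) : ℕ :=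
  Nat.card {Λ : Submodule ℤ (Fin n → ℤ) // Nat.card ((Fin n → ℤ) ⧸ Λ) = p ^ r}

/-- Fix n ≥ 2 and r ≥ 1. The ratio c(p)/a(p) tends to 1 as p → ∞ along the
primes: for every ε > 0 there is N such that |c(p)/a(p) − 1| < ε for every prime p > N. -/
theorem stmt19 (n r : ℕ) (hn : 2 ≤ n) (hr : 1 ≤ r) :
    ∀ ε : ℝ, 0 < ε → ∃ N : ℕ, ∀ p : ℕ, p.Prime → N < p →
      |((cocyclicCount n r p : ℝ) / (sublatticeCount n r p : ℝ)) - 1| < ε := by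
  intro ε hε
  obtain ⟨D, hD⟩ := Stmt19.bound (n-1) r
  have hn1 : n - 1 + 1 = n := by omega
  rw [hn1] at hD
  refine ⟨⌈(D:ℝ)/ε⌉₊ + 1, fun p hp hpN => ?_⟩
  set L := r * (n - 1) with hL
  set c := cocyclicCount n r p with hc
  set a := sublatticeCount n r p with ha
  have hpow_ne : (p:ℕ)^r ≠ 0 := pow_ne_zero _ hp.pos.ne'
  have hc_low : p ^ L ≤ c := Stmt19.card_le_cocyclic n r p (by omega) hp
  have hca : c ≤ a := Stmt19.coc_le n (p^r) hpow_ne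
  have ha_up : p * a ≤ p^(L+1) + D * p^L := hD p hp
  -- move to ℝ
  have hp0 : (0:ℝ) < p := by exact_mod_cast hp.pos
  have hc_lowR : (p:ℝ)^L ≤ (c:ℝ) := by exact_mod_cast hc_low
  have hcaR : (c:ℝ) ≤ (a:ℝ) := by exact_mod_cast hca
  have ha_upR : (p:ℝ) * a ≤ (p:ℝ)^(L+1) + (D:ℝ) * (p:ℝ)^L := by exact_mod_cast ha_up
  have hpLpos : (0:ℝ) < (p:ℝ)^L := by positivity
  have haR : (0:ℝ) < (a:ℝ) := lt_of_lt_of_le hpLpos (le_trans hc_lowR hcaR)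
  have hDp : (D:ℝ) < ε * p := by
    have h1 : ((D:ℝ)/ε) ≤ (⌈(D:ℝ)/ε⌉₊ : ℝ) := Nat.le_ceil _
    have h2 : ((⌈(D:ℝ)/ε⌉₊ : ℕ) : ℝ) + 1 ≤ (p:ℝ) := by
      have : (⌈(D:ℝ)/ε⌉₊ : ℕ) + 1 ≤ p := le_of_lt hpN
      exact_mod_cast this
    have h3 : (D:ℝ)/ε < p := by linarith
    calc (D:ℝ) = ((D:ℝ)/ε) * ε := by field_simp
      _ < (p:ℝ) * ε := mul_lt_mul_of_pos_right h3 hε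
      _ = ε * p := mul_comm _ _
  have key : (a:ℝ) - c < ε * a := by
    have h1 : (p:ℝ) * ((a:ℝ) - c) ≤ (D:ℝ) * (p:ℝ)^L := by
      have h2 : (p:ℝ) * (p:ℝ)^L ≤ (p:ℝ) * c := by nlinarith
      have h3 : (p:ℝ)^(L+1) = p * (p:ℝ)^L := by ring
      nlinarith
    have h4 : (D:ℝ) * (p:ℝ)^L ≤ (D:ℝ) * a := by
      have hD0 : (0:ℝ) ≤ (D:ℝ) := by positivity
      nlinarith [le_trans hc_lowR hcaR]
    have h5 : (D:ℝ) * a < (ε * p) * a := mul_lt_mul_of_pos_right hDp haR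
    have h6 : (p:ℝ) * ((a:ℝ) - c) < (p:ℝ) * (ε * a) := by nlinarith
    exact lt_of_mul_lt_mul_left h6 (le_of_lt hp0)
  have habs : |((c:ℝ)/a) - 1| = ((a:ℝ) - c)/a := by
    rw [abs_of_nonpos]
    · field_simp; ring
    · have : (c:ℝ)/a ≤ 1 := (div_le_one haR).mpr hcaR
      linarith
  rw [habs]
  exact (div_lt_iff₀ haR).mpr (by linarith [key])
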